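/- Let T : M_n(ℂ) → M_n(ℂ) be a linear map that is positive and trace preserving but not unital (T(𝟙) ≠ 𝟙), and let 1 < p ≤ ∞. Then ‖T‖_{p-p} > 1, i.e. there exists A ∈ M_n(ℂ) with ‖T(A)‖_p > ‖A‖_p (one may take A = 𝟙). -/

import Mathlib

open scoped ENNReal ComplexOrder

/-- The singular values of a complex square matrix `A`, i.e. the (square roots of the)
eigenvalues of `Aᴴ * A`. -/
noncomputable def singularValues {n : ℕ} (A : Matrix (Fin n) (Fin n) ℂ) : Fin n → ℝ :=
  fun i => Real.sqrt ((Matrix.posSemidef_conjTranspose_mul_self A).isHermitian.eigenvalues i)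

/-- The Schatten `p`-norm `‖A‖_p = (tr |A|^p)^{1/p}`; for `p = ∞` it is the operator
(largest singular value) norm. -/
noncomputable def schattenNorm {n : ℕ} (p : ℝ≥0∞) (A : Matrix (Fin n) (Fin n) ℂ) : ℝ :=
  if p = ⊤ then ⨆ i, singularValues A i
  else (∑ i, singularValues A i ^ p.toReal) ^ (1 / p.toReal)

/-- A linear map between matrix algebras is positive if it maps positive semi-definite
matrices to positive semi-definite matrices. -/
def IsPositiveMatrixMap {n r : ℕ} (T : Matrix (Fin n) (Fin n) ℂ →ₗ[ℂ] Matrix (Fin r) (Fin r) ℂ) :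
    Prop :=
  ∀ A : Matrix (Fin n) (Fin n) ℂ, A.PosSemidef → (T A).PosSemidef

/-- A linear map between matrix algebras is trace preserving if `tr T(A) = tr A` for all `A`. -/
def IsTracePreservingMap {n r : ℕ}
    (T : Matrix (Fin n) (Fin n) ℂ →ₗ[ℂ] Matrix (Fin r) (Fin r) ℂ) : Prop :=
  ∀ A : Matrix (Fin n) (Fin n) ℂ, (T A).trace = A.trace

open Matrix Polynomial in
private lemma charpoly_unitary_conj {n : ℕ} (U A : Matrix (Fin n) (Fin n) ℂ)
    (hU : U ∈ Matrix.unitaryGroup (Fin n) ℂ) :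
    (U * A * star U).charpoly = A.charpoly := by
  have hUU : U * star U = 1 := Matrix.mem_unitaryGroup_iff.mp hU
  have hUU' : star U * U = 1 := Matrix.mem_unitaryGroup_iff'.mp hU
  have hmap : ∀ M N : Matrix (Fin n) (Fin n) ℂ,
      (C : ℂ →+* ℂ[X]).mapMatrix (M * N) = (C : ℂ →+* ℂ[X]).mapMatrix M * (C : ℂ →+* ℂ[X]).mapMatrix N :=
    fun M N => map_mul _ M N
  have key : charmatrix (U * A * star U) =
      (C : ℂ →+* ℂ[X]).mapMatrix U * charmatrix A * (C : ℂ →+* ℂ[X]).mapMatrix (star U) := by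
    unfold charmatrix
    rw [mul_sub, sub_mul, ← hmap, ← hmap, mul_assoc, mul_assoc]
    congr 1
    rw [(Matrix.scalar_commute (X : ℂ[X]) (fun r => Commute.all _ r) _).eq, ← mul_assoc, ← hmap, hUU]
    simp
  rw [Matrix.charpoly, key, det_mul, det_mul, mul_comm, ← mul_assoc, ← det_mul, ← hmap, hUU']
  simp [Matrix.charpoly]

open Matrix Polynomial in
private lemma charpoly_diag {n : ℕ} (d : Fin n → ℂ) :
    (Matrix.diagonal d).charpoly = ∏ i, (X - C (d i)) := by
  have h : charmatrix (Matrix.diagonal d) = Matrix.diagonal (fun i => X - C (d i)) := by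
    ext i j
    by_cases h : i = j
    · subst h; simp [charmatrix_apply]
    · simp [charmatrix_apply, Matrix.diagonal_apply_ne _ h]
  rw [Matrix.charpoly, h, det_diagonal]

open Matrix Polynomial in
private lemma roots_prod' (c : Fin (n : ℕ) → ℂ) :
    (∏ i, (X - C (c i))).roots = Finset.univ.val.map c := by
  have : ∏ i, (X - C (c i)) = ((Finset.univ.val.map c).map fun a => X - C a).prod := by
    rw [Multiset.map_map]; rfl
  rw [this, roots_multiset_prod_X_sub_C]

open Matrix Polynomial in
private lemma eigenvalues_multiset {n : ℕ} {A : Matrix (Fin n) (Fin n) ℂ} (hA : A.IsHermitian)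
    (U : Matrix (Fin n) (Fin n) ℂ) (hU : U ∈ Matrix.unitaryGroup (Fin n) ℂ) (d : Fin n → ℝ)
    (hAd : A = U * Matrix.diagonal ((↑) ∘ d : Fin n → ℂ) * star U) :
    Finset.univ.val.map hA.eigenvalues = Finset.univ.val.map d := by
  have h1 : A.charpoly = ∏ i, (X - C ((d i : ℂ))) := by
    conv_lhs => rw [hAd]
    rw [charpoly_unitary_conj U _ hU, charpoly_diag]
    rfl
  have h2 : A.charpoly = ∏ i, (X - C ((hA.eigenvalues i : ℂ))) := by
    conv_lhs => rw [hA.spectral_theorem, Unitary.conjStarAlgAut_apply]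
    rw [charpoly_unitary_conj _ _ (hA.eigenvectorUnitary).2, charpoly_diag]
    rfl
  have h3 : Finset.univ.val.map (fun i => (hA.eigenvalues i : ℂ))
      = Finset.univ.val.map (fun i => (d i : ℂ)) := by
    rw [← roots_prod', ← roots_prod', ← h1, ← h2]
  apply Multiset.map_injective (f := (Complex.ofReal : ℝ → ℂ)) Complex.ofReal_injective
  rw [Multiset.map_map, Multiset.map_map]
  exact h3

open Matrix in
private lemma singVals_multiset {n : ℕ} {B : Matrix (Fin n) (Fin n) ℂ} (hB : B.PosSemidef) :
    Finset.univ.val.map (singularValues B) = Finset.univ.val.map hB.1.eigenvalues := by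
  set U : Matrix (Fin n) (Fin n) ℂ := (hB.1.eigenvectorUnitary : Matrix (Fin n) (Fin n) ℂ) with hUdef
  have hU : U ∈ Matrix.unitaryGroup (Fin n) ℂ := hB.1.eigenvectorUnitary.2
  have hUU' : star U * U = 1 := Matrix.mem_unitaryGroup_iff'.mp hU
  have hsq : Bᴴ * B = U * Matrix.diagonal ((↑) ∘ (fun i => hB.1.eigenvalues i ^ 2) : Fin n → ℂ) * star U := by
    rw [hB.1.eq]
    conv_lhs => rw [hB.1.spectral_theorem, Unitary.conjStarAlgAut_apply]
    rw [show (U * Matrix.diagonal (RCLike.ofReal ∘ hB.1.eigenvalues) * star U) *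
        (U * Matrix.diagonal (RCLike.ofReal ∘ hB.1.eigenvalues) * star U)
      = U * (Matrix.diagonal (RCLike.ofReal ∘ hB.1.eigenvalues) * ((star U * U) *
        Matrix.diagonal (RCLike.ofReal ∘ hB.1.eigenvalues))) * star U by
          simp only [Matrix.mul_assoc]]
    rw [hUU', one_mul, Matrix.diagonal_mul_diagonal]
    congr! 3
    funext i
    simp [pow_two]
  have hmul := eigenvalues_multiset (Matrix.posSemidef_conjTranspose_mul_self B).isHermitian
    U hU (fun i => hB.1.eigenvalues i ^ 2) hsq
  have : Finset.univ.val.map (singularValues B)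
      = (Finset.univ.val.map ((Matrix.posSemidef_conjTranspose_mul_self B).isHermitian.eigenvalues)).map Real.sqrt := by
    rw [Multiset.map_map]; rfl
  rw [this, hmul, Multiset.map_map]
  refine Multiset.map_congr rfl fun i _ => ?_
  simp only [Function.comp_apply]
  rw [Real.sqrt_sq (hB.eigenvalues_nonneg i)]

open Matrix in
private lemma singularValues_one' {n : ℕ} (i : Fin n) :
    singularValues (1 : Matrix (Fin n) (Fin n) ℂ) i = 1 := by
  have hB : (1 : Matrix (Fin n) (Fin n) ℂ).PosSemidef := Matrix.PosSemidef.one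
  have h1 := singVals_multiset hB
  have h2 := eigenvalues_multiset hB.1 1 (Matrix.mem_unitaryGroup_iff.mpr (by simp))
    (fun _ => 1) (by simp [Function.comp_def])
  have h := h1.trans h2
  have hm : singularValues (1 : Matrix (Fin n) (Fin n) ℂ) i
      ∈ Finset.univ.val.map (singularValues (1 : Matrix (Fin n) (Fin n) ℂ)) :=
    Multiset.mem_map_of_mem _ (Finset.mem_univ i)
  rw [h] at hm
  obtain ⟨j, _, hj⟩ := Multiset.mem_map.mp hm
  exact hj.symm


/-- If `T : M_n(ℂ) → M_n(ℂ)` is positive and trace preserving but not unital, and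
`1 < p ≤ ∞`, then `‖T‖_{p-p} > 1`: there is an `A` with `‖T(A)‖_p > ‖A‖_p`, and one may
take `A = 𝟙`. -/
theorem schattenNorm_not_contractive_of_not_unital
    (n : ℕ) (T : Matrix (Fin n) (Fin n) ℂ →ₗ[ℂ] Matrix (Fin n) (Fin n) ℂ)
    (hTpos : IsPositiveMatrixMap T) (hTtr : IsTracePreservingMap T)
    (hTnotunital : T 1 ≠ 1) (p : ℝ≥0∞) (hp : 1 < p) :
    (∃ A : Matrix (Fin n) (Fin n) ℂ, schattenNorm p A < schattenNorm p (T A)) ∧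
      schattenNorm p (1 : Matrix (Fin n) (Fin n) ℂ) < schattenNorm p (T 1) := by
  classical
  rcases Nat.eq_zero_or_pos n with h0 | hn
  · subst h0
    exact absurd (by ext i j; exact i.elim0) hTnotunital
  have hn' : (0 : ℝ) < n := by exact_mod_cast hn
  set B : Matrix (Fin n) (Fin n) ℂ := T 1 with hBdef
  have hB : B.PosSemidef := hTpos 1 Matrix.PosSemidef.one
  set lam : Fin n → ℝ := hB.1.eigenvalues with hlamdef
  have hlam0 : ∀ i, 0 ≤ lam i := hB.eigenvalues_nonneg
  -- trace of B is n
  have htr : B.trace = (n : ℂ) := by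
    rw [hBdef, hTtr 1, Matrix.trace_one]
    simp
  -- sum of eigenvalues is n
  have hsum : ∑ i, lam i = n := by
    have h1 : B.trace = ∑ i, (lam i : ℂ) := by
      conv_lhs => rw [hB.1.spectral_theorem, Unitary.conjStarAlgAut_apply]
      rw [Matrix.trace_mul_cycle]
      rw [Matrix.mem_unitaryGroup_iff'.mp hB.1.eigenvectorUnitary.2, one_mul,
        Matrix.trace_diagonal]
      rfl
    have h2 : ((∑ i, lam i : ℝ) : ℂ) = (n : ℂ) := by
      push_cast
      rw [← h1, htr]
    exact_mod_cast h2
  -- eigenvalues are not all 1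
  have hne : ¬ ∀ i, lam i = 1 := by
    intro h
    apply hTnotunital
    have hd : Matrix.diagonal (RCLike.ofReal ∘ lam : Fin n → ℂ) = 1 := by
      rw [show (RCLike.ofReal ∘ lam : Fin n → ℂ) = fun _ => 1 by
        funext i; simp [h i]]
      exact Matrix.diagonal_one
    calc T 1 = B := rfl
      _ = _ * Matrix.diagonal (RCLike.ofReal ∘ lam) * _ := hB.1.spectral_theorem.trans (Unitary.conjStarAlgAut_apply _ _)
      _ = 1 := by
          rw [hd, mul_one, Matrix.mem_unitaryGroup_iff.mp hB.1.eigenvectorUnitary.2]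
  obtain ⟨i0, hi0⟩ : ∃ i, lam i ≠ 1 := by
    by_contra h; push_neg at h; exact hne h
  have hmap := singVals_multiset hB
  -- the key inequality
  have key : schattenNorm p (1 : Matrix (Fin n) (Fin n) ℂ) < schattenNorm p B := by
    by_cases hptop : p = ⊤
    · -- sup case
      subst hptop
      simp only [schattenNorm, if_pos rfl]
      have h1 : (⨆ i, singularValues (1 : Matrix (Fin n) (Fin n) ℂ) i) = 1 := by
        have : Nonempty (Fin n) := ⟨⟨0, hn⟩⟩
        simp [singularValues_one']
      rw [h1]
      -- some eigenvalue exceeds 1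
      obtain ⟨j, hj⟩ : ∃ j, 1 < lam j := by
        by_contra h; push_neg at h
        have hlt : ∑ i, lam i < ∑ _i : Fin n, (1 : ℝ) :=
          Finset.sum_lt_sum (fun i _ => h i) ⟨i0, Finset.mem_univ i0, lt_of_le_of_ne (h i0) hi0⟩
        rw [hsum] at hlt
        simp at hlt
      obtain ⟨i1, hi1⟩ : ∃ i1, singularValues B i1 = lam j := by
        have : lam j ∈ Finset.univ.val.map lam := Multiset.mem_map_of_mem _ (Finset.mem_univ j)
        rw [← hmap] at this
        obtain ⟨i1, _, h⟩ := Multiset.mem_map.mp this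
        exact ⟨i1, h⟩
      have hle : singularValues B i1 ≤ ⨆ i, singularValues B i :=
        le_ciSup (Set.Finite.bddAbove (Set.finite_range _)) i1
      calc (1 : ℝ) < lam j := hj
        _ = singularValues B i1 := hi1.symm
        _ ≤ _ := hle
    · -- finite p case
      set q : ℝ := p.toReal with hq
      have hq1 : 1 < q := by
        rw [hq, show (1:ℝ) = (1 : ℝ≥0∞).toReal by simp]
        exact (ENNReal.toReal_lt_toReal (by simp) hptop).mpr hp
      have hq0 : 0 < q := lt_trans one_pos hq1
      simp only [schattenNorm, if_neg hptop, ← hq]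
      have h1 : ∑ i, singularValues (1 : Matrix (Fin n) (Fin n) ℂ) i ^ q = (n : ℝ) := by
        simp [singularValues_one', Real.one_rpow]
      rw [h1]
      have hsv : ∑ i, singularValues B i ^ q = ∑ i, lam i ^ q := by
        have hc := congrArg (fun m : Multiset ℝ => (m.map (fun x : ℝ => x ^ q)).sum) hmap
        simp only [Multiset.map_map] at hc
        calc ∑ i, singularValues B i ^ q
            = (Finset.univ.val.map ((fun x : ℝ => x ^ q) ∘ singularValues B)).sum := rfl
          _ = (Finset.univ.val.map ((fun x : ℝ => x ^ q) ∘ lam)).sum := hc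
          _ = ∑ i, lam i ^ q := rfl
      rw [hsv]
      -- Jensen
      obtain ⟨k, hk⟩ : ∃ k, lam k ≠ lam i0 := by
        by_contra h; push_neg at h
        apply hi0
        have : ∑ i, lam i = ∑ _i : Fin n, lam i0 := Finset.sum_congr rfl (fun i _ => h i)
        rw [hsum] at this
        simp only [Finset.sum_const, Finset.card_univ, Fintype.card_fin, nsmul_eq_mul] at this
        field_simp at this
        linarith [this]
      have hjensen := (strictConvexOn_rpow hq1).map_sum_lt
        (t := Finset.univ) (w := fun _ => (n : ℝ)⁻¹) (p := lam)
        (fun i _ => by positivity)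
        (by simp [Finset.sum_const, Finset.card_univ]; field_simp)
        (fun i _ => hlam0 i)
        ⟨k, Finset.mem_univ k, i0, Finset.mem_univ i0, hk⟩
      have hwsum : ∑ i, (n : ℝ)⁻¹ • lam i = 1 := by
        rw [← Finset.smul_sum, hsum, smul_eq_mul]
        field_simp
      rw [hwsum] at hjensen
      have hlt : (n : ℝ) < ∑ i, lam i ^ q := by
        have h2 : ∑ i, (n : ℝ)⁻¹ • lam i ^ q = (n : ℝ)⁻¹ * ∑ i, lam i ^ q := by
          rw [← Finset.smul_sum]; rfl
        rw [h2, Real.one_rpow] at hjensen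
        have := (mul_lt_mul_iff_right₀ hn').mpr hjensen
        calc (n : ℝ) = n * 1 := by ring
          _ < n * ((n : ℝ)⁻¹ * ∑ i, lam i ^ q) := by
              exact (mul_lt_mul_iff_right₀ hn').mpr hjensen
          _ = ∑ i, lam i ^ q := by field_simp
      exact Real.rpow_lt_rpow (by positivity) hlt (by positivity)
  exact ⟨⟨1, key⟩, key⟩
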